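/- Let (a₀,b₀) ∈ ℝ² with a₀ ≠ −2. For every neighbourhood W of the point (1, I₂, 0, a₀, b₀, 0, 0, 0) in ℝ × GL₂(ℝ) × ℝ² × ℝ⁵ there exists a neighbourhood N of X_{(a₀,b₀,0,0,0)} in the 12-dimensional coefficient space of planar quadratic polynomial vector fields such that every quadratic vector field Z ∈ N can be written as Z(p) = λ·A⁻¹·X_{(a,b,ε₀,ε₁,ε₂)}(A·p + v) for all p ∈ ℝ², for some (λ, A, v, a, b, ε₀, ε₁, ε₂) ∈ W. In other words, every quadratic system sufficiently close (in the topology of coefficients) to X_{(a₀,b₀,0,0,0)} with a₀ ≠ −2 can be brought by an affine change of coordinates and a constant rescaling of time to the form X_{(a,b,ε₀,ε₁,ε₂)} with (a,b,ε₀,ε₁,ε₂) close to (a₀,b₀,0,0,0). -/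

import Mathlib

open Topology Filter Matrix

/-- Evaluation of a planar quadratic polynomial vector field from its vector of
12 coefficients (6 monomials `1, x, y, x², xy, y²` for each of the 2 components). -/
noncomputable def quadEval (c : Fin 2 → Fin 6 → ℝ) (p : Fin 2 → ℝ) : Fin 2 → ℝ := fun i =>
  c i 0 + c i 1 * p 0 + c i 2 * p 1 + c i 3 * (p 0) ^ 2 + c i 4 * (p 0 * p 1) + c i 5 * (p 1) ^ 2

/-- The quadratic vector field `X_μ` for `μ = (a,b,ε₀,ε₁,ε₂)`. -/
noncomputable def Xmu (a b e0 e1 e2 : ℝ) (p : Fin 2 → ℝ) : Fin 2 → ℝ :=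
  ![(b - 2) / 4 + e1 * p 0 + (1 - b) * p 1 + a * (p 0) ^ 2 + e2 * (p 0 * p 1) + b * (p 1) ^ 2,
    e0 - 2 * (p 0 * p 1)]

/-- The coefficient vector of `X_μ`. -/
noncomputable def XmuCoeff (a b e0 e1 e2 : ℝ) : Fin 2 → Fin 6 → ℝ :=
  ![![(b - 2) / 4, e1, 1 - b, a, e2, b], ![e0, 0, 0, 0, -2, 0]]

section Aux

attribute [local instance] Matrix.normedAddCommGroup Matrix.normedSpace

abbrev QP : Type := ℝ × Matrix (Fin 2) (Fin 2) ℝ × (Fin 2 → ℝ) × (ℝ × ℝ × ℝ × ℝ × ℝ)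
abbrev QC : Type := Fin 2 → Fin 6 → ℝ
abbrev QE : Type := QP × QC

section VecEval
variable {α : Type*}
@[local simp] theorem v2e_0 (y0 y1 : α) : ![y0, y1] (0 : Fin 2) = y0 := rfl
@[local simp] theorem v2e_m0 (y0 y1 : α) (h : 0 < 2) : ![y0, y1] (⟨0, h⟩ : Fin 2) = y0 := rfl
@[local simp] theorem v2e_1 (y0 y1 : α) : ![y0, y1] (1 : Fin 2) = y1 := rfl
@[local simp] theorem v2e_m1 (y0 y1 : α) (h : 1 < 2) : ![y0, y1] (⟨1, h⟩ : Fin 2) = y1 := rfl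
@[local simp] theorem v6e_0 (y0 y1 y2 y3 y4 y5 : α) : ![y0, y1, y2, y3, y4, y5] (0 : Fin 6) = y0 := rfl
@[local simp] theorem v6e_m0 (y0 y1 y2 y3 y4 y5 : α) (h : 0 < 6) : ![y0, y1, y2, y3, y4, y5] (⟨0, h⟩ : Fin 6) = y0 := rfl
@[local simp] theorem v6e_1 (y0 y1 y2 y3 y4 y5 : α) : ![y0, y1, y2, y3, y4, y5] (1 : Fin 6) = y1 := rfl
@[local simp] theorem v6e_m1 (y0 y1 y2 y3 y4 y5 : α) (h : 1 < 6) : ![y0, y1, y2, y3, y4, y5] (⟨1, h⟩ : Fin 6) = y1 := rfl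
@[local simp] theorem v6e_2 (y0 y1 y2 y3 y4 y5 : α) : ![y0, y1, y2, y3, y4, y5] (2 : Fin 6) = y2 := rfl
@[local simp] theorem v6e_m2 (y0 y1 y2 y3 y4 y5 : α) (h : 2 < 6) : ![y0, y1, y2, y3, y4, y5] (⟨2, h⟩ : Fin 6) = y2 := rfl
@[local simp] theorem v6e_3 (y0 y1 y2 y3 y4 y5 : α) : ![y0, y1, y2, y3, y4, y5] (3 : Fin 6) = y3 := rfl
@[local simp] theorem v6e_m3 (y0 y1 y2 y3 y4 y5 : α) (h : 3 < 6) : ![y0, y1, y2, y3, y4, y5] (⟨3, h⟩ : Fin 6) = y3 := rfl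
@[local simp] theorem v6e_4 (y0 y1 y2 y3 y4 y5 : α) : ![y0, y1, y2, y3, y4, y5] (4 : Fin 6) = y4 := rfl
@[local simp] theorem v6e_m4 (y0 y1 y2 y3 y4 y5 : α) (h : 4 < 6) : ![y0, y1, y2, y3, y4, y5] (⟨4, h⟩ : Fin 6) = y4 := rfl
@[local simp] theorem v6e_5 (y0 y1 y2 y3 y4 y5 : α) : ![y0, y1, y2, y3, y4, y5] (5 : Fin 6) = y5 := rfl
@[local simp] theorem v6e_m5 (y0 y1 y2 y3 y4 y5 : α) (h : 5 < 6) : ![y0, y1, y2, y3, y4, y5] (⟨5, h⟩ : Fin 6) = y5 := rfl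
end VecEval

noncomputable def rhsC (l : ℝ) (A : Matrix (Fin 2) (Fin 2) ℝ) (v : Fin 2 → ℝ)
    (a b e0 e1 e2 : ℝ) : Fin 2 → Fin 6 → ℝ :=
  ![![a * l * v 0 * v 0 + (1 / 4 : ℝ) * b * l - b * l * v 1 + b * l * v 1 * v 1 + e1 * l * v 0 + e2 * l * v 0 * v 1 - (1 / 2 : ℝ) * l + l * v 1,
     2 * A 0 0 * a * l * v 0 + A 0 0 * e1 * l + A 0 0 * e2 * l * v 1 - A 1 0 * b * l + 2 * A 1 0 * b * l * v 1 + A 1 0 * e2 * l * v 0 + A 1 0 * l,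
     2 * A 0 1 * a * l * v 0 + A 0 1 * e1 * l + A 0 1 * e2 * l * v 1 - A 1 1 * b * l + 2 * A 1 1 * b * l * v 1 + A 1 1 * e2 * l * v 0 + A 1 1 * l,
     A 0 0 * A 0 0 * a * l + A 0 0 * A 1 0 * e2 * l + A 1 0 * A 1 0 * b * l,
     2 * A 0 0 * A 0 1 * a * l + A 0 0 * A 1 1 * e2 * l + A 0 1 * A 1 0 * e2 * l + 2 * A 1 0 * A 1 1 * b * l,
     A 0 1 * A 0 1 * a * l + A 0 1 * A 1 1 * e2 * l + A 1 1 * A 1 1 * b * l],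
   ![e0 * l - 2 * l * v 0 * v 1,
     -2 * A 0 0 * l * v 1 - 2 * A 1 0 * l * v 0,
     -2 * A 0 1 * l * v 1 - 2 * A 1 1 * l * v 0,
     -2 * A 0 0 * A 1 0 * l,
     -2 * A 0 0 * A 1 1 * l - 2 * A 0 1 * A 1 0 * l,
     -2 * A 0 1 * A 1 1 * l]]

noncomputable def Kmat (a₀ b₀ : ℝ) (w : QE) : Fin 2 → Fin 6 → ℝ :=
  ![![(1 / 4 : ℝ) * b₀ * w.1.2.1 0 0 - (1 / 4 : ℝ) * b₀ * w.1.1 + b₀ * w.1.2.2.1 1 - (1 / 2 : ℝ) * w.1.2.1 0 0 - (1 / 4 : ℝ) * w.1.2.2.2.2.1 + w.2 0 0 + (1 / 2 : ℝ) * w.1.1 - w.1.2.2.1 1,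
     -2 * a₀ * w.1.2.2.1 0 + b₀ * w.1.2.1 1 0 - w.1.2.1 1 0 + w.2 0 1 - w.1.2.2.2.2.2.2.1,
     -b₀ * w.1.2.1 0 0 + b₀ * w.1.2.1 1 1 + b₀ * w.1.1 - 2 * b₀ * w.1.2.2.1 1 + w.1.2.1 0 0 - w.1.2.1 1 1 + w.1.2.2.2.2.1 + w.2 0 2 - w.1.1,
     -a₀ * w.1.2.1 0 0 - a₀ * w.1.1 - w.1.2.2.2.1 + w.2 0 3,
     -2 * a₀ * w.1.2.1 0 1 - 2 * b₀ * w.1.2.1 1 0 - 2 * w.1.2.1 0 1 + w.2 0 4 - w.1.2.2.2.2.2.2.2,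
     b₀ * w.1.2.1 0 0 - 2 * b₀ * w.1.2.1 1 1 - b₀ * w.1.1 - w.1.2.2.2.2.1 + w.2 0 5],
   ![(1 / 4 : ℝ) * b₀ * w.1.2.1 1 0 - (1 / 2 : ℝ) * w.1.2.1 1 0 + w.2 1 0 - w.1.2.2.2.2.2.1,
     w.2 1 1 + 2 * w.1.2.2.1 1,
     -b₀ * w.1.2.1 1 0 + w.1.2.1 1 0 + w.2 1 2 + 2 * w.1.2.2.1 0,
     a₀ * w.1.2.1 1 0 + 2 * w.1.2.1 1 0 + w.2 1 3,
     2 * w.1.2.1 0 0 + w.2 1 4 + 2 * w.1.1,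
     b₀ * w.1.2.1 1 0 + 2 * w.1.2.1 0 1 + w.2 1 5]]

noncomputable def mixC (A : Matrix (Fin 2) (Fin 2) ℝ) (c : QC) : QC :=
  fun i j => A i 0 * c 0 j + A i 1 * c 1 j

theorem mixC_eval (A : Matrix (Fin 2) (Fin 2) ℝ) (c : QC) (p : Fin 2 → ℝ) :
    quadEval (mixC A c) p = A.mulVec (quadEval c p) := by
  funext i
  simp only [quadEval, mixC, Matrix.mulVec, dotProduct, Fin.sum_univ_two]
  ring

theorem rhsC_eval (l : ℝ) (A : Matrix (Fin 2) (Fin 2) ℝ) (v : Fin 2 → ℝ)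
    (a b e0 e1 e2 : ℝ) (p : Fin 2 → ℝ) :
    quadEval (rhsC l A v a b e0 e1 e2) p = l • Xmu a b e0 e1 e2 (A.mulVec p + v) := by
  funext i
  fin_cases i <;>
  · simp only [quadEval, rhsC, Xmu, Matrix.mulVec, dotProduct, Fin.sum_univ_two,
      Pi.add_apply, Pi.smul_apply, smul_eq_mul, v2e_0, v2e_1, v2e_m0, v2e_m1,
      v6e_0, v6e_1, v6e_2, v6e_3, v6e_4, v6e_5, v6e_m0, v6e_m1, v6e_m2, v6e_m3, v6e_m4, v6e_m5]
    ring

noncomputable def thetaF (x : QE) : QC := fun i j =>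
  mixC x.1.2.1 x.2 i j -
    rhsC x.1.1 x.1.2.1 x.1.2.2.1 x.1.2.2.2.1 x.1.2.2.2.2.1 x.1.2.2.2.2.2.1
      x.1.2.2.2.2.2.2.1 x.1.2.2.2.2.2.2.2 i j

noncomputable def phiF (x : QE) : QC × QC := (thetaF x, x.2)

noncomputable def bpt (a₀ b₀ : ℝ) : QE :=
  ((1, 1, 0, (a₀, b₀, 0, 0, 0)), XmuCoeff a₀ b₀ 0 0 0)

theorem phiF_base (a₀ b₀ : ℝ) : phiF (bpt a₀ b₀) = (0, XmuCoeff a₀ b₀ 0 0 0) := by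
  refine Prod.ext ?_ rfl
  funext i j
  fin_cases i <;> fin_cases j <;>
  · simp only [phiF, thetaF, mixC, rhsC, bpt, XmuCoeff, Matrix.one_apply, Pi.zero_apply,
      v2e_0, v2e_1, v2e_m0, v2e_m1,
      v6e_0, v6e_1, v6e_2, v6e_3, v6e_4, v6e_5, v6e_m0, v6e_m1, v6e_m2, v6e_m3, v6e_m4, v6e_m5]
    norm_num
    try ring

theorem contDiff_phiF : ContDiff ℝ 1 phiF := by
  apply ContDiff.prodMk
  · apply contDiff_pi.2
    intro i
    apply contDiff_pi.2
    intro j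
    fin_cases i <;> fin_cases j <;>
    · simp only [thetaF, mixC, rhsC, v2e_0, v2e_1, v2e_m0, v2e_m1,
        v6e_0, v6e_1, v6e_2, v6e_3, v6e_4, v6e_5, v6e_m0, v6e_m1, v6e_m2, v6e_m3, v6e_m4, v6e_m5]
      fun_prop
  · exact contDiff_snd

theorem hornerD (k1 k2 k3 k4 : ℝ) :
    HasDerivAt (fun s : ℝ => s * (k1 + s * (k2 + s * (k3 + s * k4)))) k1 0 := by
  have h4 : HasDerivAt (fun s : ℝ => k3 + s * k4) k4 0 := by
    simpa using (((hasDerivAt_id (0:ℝ)).mul_const k4).const_add k3)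
  have h3 : HasDerivAt (fun s : ℝ => k2 + s * (k3 + s * k4)) (k3 + 0 * k4) 0 := by
    simpa using (((hasDerivAt_id (0:ℝ)).mul h4).const_add k2)
  have h2 : HasDerivAt (fun s : ℝ => k1 + s * (k2 + s * (k3 + s * k4))) (k2 + 0 * (k3 + 0 * k4)) 0 := by
    simpa using (((hasDerivAt_id (0:ℝ)).mul h3).const_add k1)
  exact ((hasDerivAt_id' (x := (0:ℝ))).mul h2).congr_deriv (by simp)

theorem line_hasDerivAt (x w : QE) : HasDerivAt (fun s : ℝ => x + s • w) w 0 := by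
  exact (((hasDerivAt_id (0:ℝ)).smul_const w).const_add x).congr_deriv (by simp)

theorem theta_dir (a₀ b₀ : ℝ) (w : QE) (i : Fin 2) (j : Fin 6) :
    HasDerivAt (fun s : ℝ => thetaF (bpt a₀ b₀ + s • w) i j) (Kmat a₀ b₀ w i j) 0 := by
  fin_cases i <;> fin_cases j
  · show HasDerivAt (fun s : ℝ => thetaF (bpt a₀ b₀ + s • w) 0 0) (Kmat a₀ b₀ w 0 0) 0
    have hh := hornerD ((1 / 4 : ℝ) * b₀ * w.1.2.1 0 0 - (1 / 4 : ℝ) * b₀ * w.1.1 + b₀ * w.1.2.2.1 1 - (1 / 2 : ℝ) * w.1.2.1 0 0 - (1 / 4 : ℝ) * w.1.2.2.2.2.1 + w.2 0 0 + (1 / 2 : ℝ) * w.1.1 - w.1.2.2.1 1) (-a₀ * w.1.2.2.1 0 * w.1.2.2.1 0 + b₀ * w.1.1 * w.1.2.2.1 1 - b₀ * w.1.2.2.1 1 * w.1.2.2.1 1 + w.1.2.1 0 0 * w.2 0 0 + w.1.2.1 0 1 * w.2 1 0 - (1 / 4 : ℝ) * w.1.2.2.2.2.1 * w.1.1 + w.1.2.2.2.2.1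 * w.1.2.2.1 1 - w.1.2.2.2.2.2.2.1 * w.1.2.2.1 0 - w.1.1 * w.1.2.2.1 1)
      (-a₀ * w.1.1 * w.1.2.2.1 0 * w.1.2.2.1 0 - b₀ * w.1.1 * w.1.2.2.1 1 * w.1.2.2.1 1 - w.1.2.2.2.1 * w.1.2.2.1 0 * w.1.2.2.1 0 + w.1.2.2.2.2.1 * w.1.1 * w.1.2.2.1 1 - w.1.2.2.2.2.1 * w.1.2.2.1 1 * w.1.2.2.1 1 - w.1.2.2.2.2.2.2.1 * w.1.1 * w.1.2.2.1 0 - w.1.2.2.2.2.2.2.2 * w.1.2.2.1 0 * w.1.2.2.1 1) (-w.1.2.2.2.1 * w.1.1 * w.1.2.2.1 0 * w.1.2.2.1 0 - w.1.2.2.2.2.1 * w.1.1 * w.1.2.2.1 1 * w.1.2.2.1 1 - w.1.2.2.2.2.2.2.2 * w.1.1 * w.1.2.2.1 0 * w.1.2.2.1 1)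
    have heq : (fun s : ℝ => thetaF (bpt a₀ b₀ + s • w) 0 0) =
        (fun s : ℝ => s * (((1 / 4 : ℝ) * b₀ * w.1.2.1 0 0 - (1 / 4 : ℝ) * b₀ * w.1.1 + b₀ * w.1.2.2.1 1 - (1 / 2 : ℝ) * w.1.2.1 0 0 - (1 / 4 : ℝ) * w.1.2.2.2.2.1 + w.2 0 0 + (1 / 2 : ℝ) * w.1.1 - w.1.2.2.1 1) + s * ((-a₀ * w.1.2.2.1 0 * w.1.2.2.1 0 + b₀ * w.1.1 * w.1.2.2.1 1 - b₀ * w.1.2.2.1 1 * w.1.2.2.1 1 + w.1.2.1 0 0 * w.2 0 0 + w.1.2.1 0 1 * w.2 1 0 - (1 / 4 : ℝ) * w.1.2.2.2.2.1 * w.1.1 + w.1.2.2.2.2.1 * w.1.2.2.1 1 - w.1.2.2.2.2.2.2.1 * w.1.2.2.1 0 - w.1.1 * w.1.2.2.1 1) + s * ((-a₀ * w.1.1 * w.1.2.2.1 0 * w.1.2.2.1 0 - b₀ * w.1.1 * w.1.2.2.1 1 * w.1.2.2.1 1 - w.1.2.2.2.1 * w.1.2.2.1 0 * w.1.2.2.1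 0 + w.1.2.2.2.2.1 * w.1.1 * w.1.2.2.1 1 - w.1.2.2.2.2.1 * w.1.2.2.1 1 * w.1.2.2.1 1 - w.1.2.2.2.2.2.2.1 * w.1.1 * w.1.2.2.1 0 - w.1.2.2.2.2.2.2.2 * w.1.2.2.1 0 * w.1.2.2.1 1) + s * (-w.1.2.2.2.1 * w.1.1 * w.1.2.2.1 0 * w.1.2.2.1 0 - w.1.2.2.2.2.1 * w.1.1 * w.1.2.2.1 1 * w.1.2.2.1 1 - w.1.2.2.2.2.2.2.2 * w.1.1 * w.1.2.2.1 0 * w.1.2.2.1 1))))) := by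
      funext s
      simp only [thetaF, mixC, rhsC, bpt, XmuCoeff, Prod.fst_add, Prod.snd_add,
        Prod.smul_fst, Prod.smul_snd, Pi.add_apply, Pi.smul_apply, Pi.zero_apply,
        Matrix.add_apply, Matrix.smul_apply, Matrix.one_apply, smul_eq_mul,
        v2e_0, v2e_1, v2e_m0, v2e_m1,
        v6e_0, v6e_1, v6e_2, v6e_3, v6e_4, v6e_5, v6e_m0, v6e_m1, v6e_m2, v6e_m3, v6e_m4, v6e_m5]
      norm_num
      ring
    rw [heq]
    convert hh using 1
    rfl
  · show HasDerivAt (fun s : ℝ => thetaF (bpt a₀ b₀ + s • w) 0 1) (Kmat a₀ b₀ w 0 1) 0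
    have hh := hornerD (-2 * a₀ * w.1.2.2.1 0 + b₀ * w.1.2.1 1 0 - w.1.2.1 1 0 + w.2 0 1 - w.1.2.2.2.2.2.2.1) (-2 * a₀ * w.1.2.1 0 0 * w.1.2.2.1 0 - 2 * a₀ * w.1.1 * w.1.2.2.1 0 + b₀ * w.1.2.1 1 0 * w.1.1 - 2 * b₀ * w.1.2.1 1 0 * w.1.2.2.1 1 + w.1.2.1 0 0 * w.2 0 1 - w.1.2.1 0 0 * w.1.2.2.2.2.2.2.1 + w.1.2.1 0 1 * w.2 1 1 + w.1.2.1 1 0 * w.1.2.2.2.2.1 - w.1.2.1 1 0 * w.1.1 - 2 * w.1.2.2.2.1 * w.1.2.2.1 0 - w.1.2.2.2.2.2.2.1 * w.1.1 - w.1.2.2.2.2.2.2.2 * w.1.2.2.1 1)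
      (-2 * a₀ * w.1.2.1 0 0 * w.1.1 * w.1.2.2.1 0 - 2 * b₀ * w.1.2.1 1 0 * w.1.1 * w.1.2.2.1 1 - 2 * w.1.2.1 0 0 * w.1.2.2.2.1 * w.1.2.2.1 0 - w.1.2.1 0 0 * w.1.2.2.2.2.2.2.1 * w.1.1 - w.1.2.1 0 0 * w.1.2.2.2.2.2.2.2 * w.1.2.2.1 1 + w.1.2.1 1 0 * w.1.2.2.2.2.1 * w.1.1 - 2 * w.1.2.1 1 0 * w.1.2.2.2.2.1 * w.1.2.2.1 1 - w.1.2.1 1 0 * w.1.2.2.2.2.2.2.2 * w.1.2.2.1 0 - 2 * w.1.2.2.2.1 * w.1.1 * w.1.2.2.1 0 - w.1.2.2.2.2.2.2.2 * w.1.1 * w.1.2.2.1 1) (-2 * w.1.2.1 0 0 * w.1.2.2.2.1 * w.1.1 * w.1.2.2.1 0 - w.1.2.1 0 0 * w.1.2.2.2.2.2.2.2 * w.1.1 * w.1.2.2.1 1 - 2 * w.1.2.1 1 0 * w.1.2.2.2.2.1 * w.1.1 * w.1.2.2.1 1 - w.1.2.1 1 0 * w.1.2.2.2.2.2.2.2 *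 w.1.1 * w.1.2.2.1 0)
    have heq : (fun s : ℝ => thetaF (bpt a₀ b₀ + s • w) 0 1) =
        (fun s : ℝ => s * ((-2 * a₀ * w.1.2.2.1 0 + b₀ * w.1.2.1 1 0 - w.1.2.1 1 0 + w.2 0 1 - w.1.2.2.2.2.2.2.1) + s * ((-2 * a₀ * w.1.2.1 0 0 * w.1.2.2.1 0 - 2 * a₀ * w.1.1 * w.1.2.2.1 0 + b₀ * w.1.2.1 1 0 * w.1.1 - 2 * b₀ * w.1.2.1 1 0 * w.1.2.2.1 1 + w.1.2.1 0 0 * w.2 0 1 - w.1.2.1 0 0 * w.1.2.2.2.2.2.2.1 + w.1.2.1 0 1 * w.2 1 1 + w.1.2.1 1 0 * w.1.2.2.2.2.1 - w.1.2.1 1 0 * w.1.1 - 2 * w.1.2.2.2.1 * w.1.2.2.1 0 - w.1.2.2.2.2.2.2.1 * w.1.1 - w.1.2.2.2.2.2.2.2 * w.1.2.2.1 1) + s * ((-2 * a₀ * w.1.2.1 0 0 * w.1.1 * w.1.2.2.1 0 - 2 * b₀ * w.1.2.1 1 0 * w.1.1 * w.1.2.2.1 1 - 2 * w.1.2.1 0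 0 * w.1.2.2.2.1 * w.1.2.2.1 0 - w.1.2.1 0 0 * w.1.2.2.2.2.2.2.1 * w.1.1 - w.1.2.1 0 0 * w.1.2.2.2.2.2.2.2 * w.1.2.2.1 1 + w.1.2.1 1 0 * w.1.2.2.2.2.1 * w.1.1 - 2 * w.1.2.1 1 0 * w.1.2.2.2.2.1 * w.1.2.2.1 1 - w.1.2.1 1 0 * w.1.2.2.2.2.2.2.2 * w.1.2.2.1 0 - 2 * w.1.2.2.2.1 * w.1.1 * w.1.2.2.1 0 - w.1.2.2.2.2.2.2.2 * w.1.1 * w.1.2.2.1 1) + s * (-2 * w.1.2.1 0 0 * w.1.2.2.2.1 * w.1.1 * w.1.2.2.1 0 - w.1.2.1 0 0 * w.1.2.2.2.2.2.2.2 * w.1.1 * w.1.2.2.1 1 - 2 * w.1.2.1 1 0 * w.1.2.2.2.2.1 * w.1.1 * w.1.2.2.1 1 - w.1.2.1 1 0 * w.1.2.2.2.2.2.2.2 * w.1.1 * w.1.2.2.1 0))))) := by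
      funext s
      simp only [thetaF, mixC, rhsC, bpt, XmuCoeff, Prod.fst_add, Prod.snd_add,
        Prod.smul_fst, Prod.smul_snd, Pi.add_apply, Pi.smul_apply, Pi.zero_apply,
        Matrix.add_apply, Matrix.smul_apply, Matrix.one_apply, smul_eq_mul,
        v2e_0, v2e_1, v2e_m0, v2e_m1,
        v6e_0, v6e_1, v6e_2, v6e_3, v6e_4, v6e_5, v6e_m0, v6e_m1, v6e_m2, v6e_m3, v6e_m4, v6e_m5]
      norm_num
      ring
    rw [heq]
    convert hh using 1
    rfl
  · show HasDerivAt (fun s : ℝ => thetaF (bpt a₀ b₀ + s • w) 0 2) (Kmat a₀ b₀ w 0 2) 0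
    have hh := hornerD (-b₀ * w.1.2.1 0 0 + b₀ * w.1.2.1 1 1 + b₀ * w.1.1 - 2 * b₀ * w.1.2.2.1 1 + w.1.2.1 0 0 - w.1.2.1 1 1 + w.1.2.2.2.2.1 + w.2 0 2 - w.1.1) (-2 * a₀ * w.1.2.1 0 1 * w.1.2.2.1 0 + b₀ * w.1.2.1 1 1 * w.1.1 - 2 * b₀ * w.1.2.1 1 1 * w.1.2.2.1 1 - 2 * b₀ * w.1.1 * w.1.2.2.1 1 + w.1.2.1 0 0 * w.2 0 2 + w.1.2.1 0 1 * w.2 1 2 - w.1.2.1 0 1 * w.1.2.2.2.2.2.2.1 + w.1.2.1 1 1 * w.1.2.2.2.2.1 - w.1.2.1 1 1 * w.1.1 + w.1.2.2.2.2.1 * w.1.1 - 2 * w.1.2.2.2.2.1 * w.1.2.2.1 1 - w.1.2.2.2.2.2.2.2 * w.1.2.2.1 0)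
      (-2 * a₀ * w.1.2.1 0 1 * w.1.1 * w.1.2.2.1 0 - 2 * b₀ * w.1.2.1 1 1 * w.1.1 * w.1.2.2.1 1 - 2 * w.1.2.1 0 1 * w.1.2.2.2.1 * w.1.2.2.1 0 - w.1.2.1 0 1 * w.1.2.2.2.2.2.2.1 * w.1.1 - w.1.2.1 0 1 * w.1.2.2.2.2.2.2.2 * w.1.2.2.1 1 + w.1.2.1 1 1 * w.1.2.2.2.2.1 * w.1.1 - 2 * w.1.2.1 1 1 * w.1.2.2.2.2.1 * w.1.2.2.1 1 - w.1.2.1 1 1 * w.1.2.2.2.2.2.2.2 * w.1.2.2.1 0 - 2 * w.1.2.2.2.2.1 * w.1.1 * w.1.2.2.1 1 - w.1.2.2.2.2.2.2.2 * w.1.1 * w.1.2.2.1 0) (-2 * w.1.2.1 0 1 * w.1.2.2.2.1 * w.1.1 * w.1.2.2.1 0 - w.1.2.1 0 1 * w.1.2.2.2.2.2.2.2 * w.1.1 * w.1.2.2.1 1 - 2 * w.1.2.1 1 1 * w.1.2.2.2.2.1 * w.1.1 * w.1.2.2.1 1 - w.1.2.1 1 1 * w.1.2.2.2.2.2.2.2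 * w.1.1 * w.1.2.2.1 0)
    have heq : (fun s : ℝ => thetaF (bpt a₀ b₀ + s • w) 0 2) =
        (fun s : ℝ => s * ((-b₀ * w.1.2.1 0 0 + b₀ * w.1.2.1 1 1 + b₀ * w.1.1 - 2 * b₀ * w.1.2.2.1 1 + w.1.2.1 0 0 - w.1.2.1 1 1 + w.1.2.2.2.2.1 + w.2 0 2 - w.1.1) + s * ((-2 * a₀ * w.1.2.1 0 1 * w.1.2.2.1 0 + b₀ * w.1.2.1 1 1 * w.1.1 - 2 * b₀ * w.1.2.1 1 1 * w.1.2.2.1 1 - 2 * b₀ * w.1.1 * w.1.2.2.1 1 + w.1.2.1 0 0 * w.2 0 2 + w.1.2.1 0 1 * w.2 1 2 - w.1.2.1 0 1 * w.1.2.2.2.2.2.2.1 + w.1.2.1 1 1 * w.1.2.2.2.2.1 - w.1.2.1 1 1 * w.1.1 + w.1.2.2.2.2.1 * w.1.1 - 2 * w.1.2.2.2.2.1 * w.1.2.2.1 1 - w.1.2.2.2.2.2.2.2 * w.1.2.2.1 0) + s * ((-2 * a₀ * w.1.2.1 0 1 * w.1.1 * w.1.2.2.1 0 - 2 * b₀ *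 w.1.2.1 1 1 * w.1.1 * w.1.2.2.1 1 - 2 * w.1.2.1 0 1 * w.1.2.2.2.1 * w.1.2.2.1 0 - w.1.2.1 0 1 * w.1.2.2.2.2.2.2.1 * w.1.1 - w.1.2.1 0 1 * w.1.2.2.2.2.2.2.2 * w.1.2.2.1 1 + w.1.2.1 1 1 * w.1.2.2.2.2.1 * w.1.1 - 2 * w.1.2.1 1 1 * w.1.2.2.2.2.1 * w.1.2.2.1 1 - w.1.2.1 1 1 * w.1.2.2.2.2.2.2.2 * w.1.2.2.1 0 - 2 * w.1.2.2.2.2.1 * w.1.1 * w.1.2.2.1 1 - w.1.2.2.2.2.2.2.2 * w.1.1 * w.1.2.2.1 0) + s * (-2 * w.1.2.1 0 1 * w.1.2.2.2.1 * w.1.1 * w.1.2.2.1 0 - w.1.2.1 0 1 * w.1.2.2.2.2.2.2.2 * w.1.1 * w.1.2.2.1 1 - 2 * w.1.2.1 1 1 * w.1.2.2.2.2.1 * w.1.1 * w.1.2.2.1 1 - w.1.2.1 1 1 * w.1.2.2.2.2.2.2.2 * w.1.1 * w.1.2.2.1 0))))) := by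
      funext s
      simp only [thetaF, mixC, rhsC, bpt, XmuCoeff, Prod.fst_add, Prod.snd_add,
        Prod.smul_fst, Prod.smul_snd, Pi.add_apply, Pi.smul_apply, Pi.zero_apply,
        Matrix.add_apply, Matrix.smul_apply, Matrix.one_apply, smul_eq_mul,
        v2e_0, v2e_1, v2e_m0, v2e_m1,
        v6e_0, v6e_1, v6e_2, v6e_3, v6e_4, v6e_5, v6e_m0, v6e_m1, v6e_m2, v6e_m3, v6e_m4, v6e_m5]
      norm_num
      ring
    rw [heq]
    convert hh using 1
    rfl
  · show HasDerivAt (fun s : ℝ => thetaF (bpt a₀ b₀ + s • w) 0 3) (Kmat a₀ b₀ w 0 3) 0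
    have hh := hornerD (-a₀ * w.1.2.1 0 0 - a₀ * w.1.1 - w.1.2.2.2.1 + w.2 0 3) (-a₀ * w.1.2.1 0 0 * w.1.2.1 0 0 - 2 * a₀ * w.1.2.1 0 0 * w.1.1 - b₀ * w.1.2.1 1 0 * w.1.2.1 1 0 - 2 * w.1.2.1 0 0 * w.1.2.2.2.1 + w.1.2.1 0 0 * w.2 0 3 + w.1.2.1 0 1 * w.2 1 3 - w.1.2.1 1 0 * w.1.2.2.2.2.2.2.2 - w.1.2.2.2.1 * w.1.1)
      (-a₀ * w.1.2.1 0 0 * w.1.2.1 0 0 * w.1.1 - b₀ * w.1.2.1 1 0 * w.1.2.1 1 0 * w.1.1 - w.1.2.1 0 0 * w.1.2.1 0 0 * w.1.2.2.2.1 - w.1.2.1 0 0 * w.1.2.1 1 0 * w.1.2.2.2.2.2.2.2 - 2 * w.1.2.1 0 0 * w.1.2.2.2.1 * w.1.1 - w.1.2.1 1 0 * w.1.2.1 1 0 * w.1.2.2.2.2.1 - w.1.2.1 1 0 * w.1.2.2.2.2.2.2.2 * w.1.1) (-w.1.2.1 0 0 * w.1.2.1 0 0 * w.1.2.2.2.1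 * w.1.1 - w.1.2.1 0 0 * w.1.2.1 1 0 * w.1.2.2.2.2.2.2.2 * w.1.1 - w.1.2.1 1 0 * w.1.2.1 1 0 * w.1.2.2.2.2.1 * w.1.1)
    have heq : (fun s : ℝ => thetaF (bpt a₀ b₀ + s • w) 0 3) =
        (fun s : ℝ => s * ((-a₀ * w.1.2.1 0 0 - a₀ * w.1.1 - w.1.2.2.2.1 + w.2 0 3) + s * ((-a₀ * w.1.2.1 0 0 * w.1.2.1 0 0 - 2 * a₀ * w.1.2.1 0 0 * w.1.1 - b₀ * w.1.2.1 1 0 * w.1.2.1 1 0 - 2 * w.1.2.1 0 0 * w.1.2.2.2.1 + w.1.2.1 0 0 * w.2 0 3 + w.1.2.1 0 1 * w.2 1 3 - w.1.2.1 1 0 * w.1.2.2.2.2.2.2.2 - w.1.2.2.2.1 * w.1.1) + s * ((-a₀ * w.1.2.1 0 0 * w.1.2.1 0 0 * w.1.1 - b₀ * w.1.2.1 1 0 * w.1.2.1 1 0 * w.1.1 - w.1.2.1 0 0 * w.1.2.1 0 0 * w.1.2.2.2.1 - w.1.2.1 0 0 * w.1.2.1 1 0 * w.1.2.2.2.2.2.2.2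 - 2 * w.1.2.1 0 0 * w.1.2.2.2.1 * w.1.1 - w.1.2.1 1 0 * w.1.2.1 1 0 * w.1.2.2.2.2.1 - w.1.2.1 1 0 * w.1.2.2.2.2.2.2.2 * w.1.1) + s * (-w.1.2.1 0 0 * w.1.2.1 0 0 * w.1.2.2.2.1 * w.1.1 - w.1.2.1 0 0 * w.1.2.1 1 0 * w.1.2.2.2.2.2.2.2 * w.1.1 - w.1.2.1 1 0 * w.1.2.1 1 0 * w.1.2.2.2.2.1 * w.1.1))))) := by
      funext s
      simp only [thetaF, mixC, rhsC, bpt, XmuCoeff, Prod.fst_add, Prod.snd_add,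
        Prod.smul_fst, Prod.smul_snd, Pi.add_apply, Pi.smul_apply, Pi.zero_apply,
        Matrix.add_apply, Matrix.smul_apply, Matrix.one_apply, smul_eq_mul,
        v2e_0, v2e_1, v2e_m0, v2e_m1,
        v6e_0, v6e_1, v6e_2, v6e_3, v6e_4, v6e_5, v6e_m0, v6e_m1, v6e_m2, v6e_m3, v6e_m4, v6e_m5]
      norm_num
      ring
    rw [heq]
    convert hh using 1
    rfl
  · show HasDerivAt (fun s : ℝ => thetaF (bpt a₀ b₀ + s • w) 0 4) (Kmat a₀ b₀ w 0 4) 0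
    have hh := hornerD (-2 * a₀ * w.1.2.1 0 1 - 2 * b₀ * w.1.2.1 1 0 - 2 * w.1.2.1 0 1 + w.2 0 4 - w.1.2.2.2.2.2.2.2) (-2 * a₀ * w.1.2.1 0 0 * w.1.2.1 0 1 - 2 * a₀ * w.1.2.1 0 1 * w.1.1 - 2 * b₀ * w.1.2.1 1 0 * w.1.2.1 1 1 - 2 * b₀ * w.1.2.1 1 0 * w.1.1 + w.1.2.1 0 0 * w.2 0 4 - w.1.2.1 0 0 * w.1.2.2.2.2.2.2.2 - 2 * w.1.2.1 0 1 * w.1.2.2.2.1 + w.1.2.1 0 1 * w.2 1 4 - 2 * w.1.2.1 1 0 * w.1.2.2.2.2.1 - w.1.2.1 1 1 * w.1.2.2.2.2.2.2.2 - w.1.2.2.2.2.2.2.2 * w.1.1)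
      (-2 * a₀ * w.1.2.1 0 0 * w.1.2.1 0 1 * w.1.1 - 2 * b₀ * w.1.2.1 1 0 * w.1.2.1 1 1 * w.1.1 - 2 * w.1.2.1 0 0 * w.1.2.1 0 1 * w.1.2.2.2.1 - w.1.2.1 0 0 * w.1.2.1 1 1 * w.1.2.2.2.2.2.2.2 - w.1.2.1 0 0 * w.1.2.2.2.2.2.2.2 * w.1.1 - w.1.2.1 0 1 * w.1.2.1 1 0 * w.1.2.2.2.2.2.2.2 - 2 * w.1.2.1 0 1 * w.1.2.2.2.1 * w.1.1 - 2 * w.1.2.1 1 0 * w.1.2.1 1 1 * w.1.2.2.2.2.1 - 2 * w.1.2.1 1 0 * w.1.2.2.2.2.1 * w.1.1 - w.1.2.1 1 1 * w.1.2.2.2.2.2.2.2 * w.1.1) (-2 * w.1.2.1 0 0 * w.1.2.1 0 1 * w.1.2.2.2.1 * w.1.1 - w.1.2.1 0 0 * w.1.2.1 1 1 * w.1.2.2.2.2.2.2.2 * w.1.1 - w.1.2.1 0 1 * w.1.2.1 1 0 * w.1.2.2.2.2.2.2.2 * w.1.1 - 2 * w.1.2.1 1 0 * w.1.2.1 1 1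 * w.1.2.2.2.2.1 * w.1.1)
    have heq : (fun s : ℝ => thetaF (bpt a₀ b₀ + s • w) 0 4) =
        (fun s : ℝ => s * ((-2 * a₀ * w.1.2.1 0 1 - 2 * b₀ * w.1.2.1 1 0 - 2 * w.1.2.1 0 1 + w.2 0 4 - w.1.2.2.2.2.2.2.2) + s * ((-2 * a₀ * w.1.2.1 0 0 * w.1.2.1 0 1 - 2 * a₀ * w.1.2.1 0 1 * w.1.1 - 2 * b₀ * w.1.2.1 1 0 * w.1.2.1 1 1 - 2 * b₀ * w.1.2.1 1 0 * w.1.1 + w.1.2.1 0 0 * w.2 0 4 - w.1.2.1 0 0 * w.1.2.2.2.2.2.2.2 - 2 * w.1.2.1 0 1 * w.1.2.2.2.1 + w.1.2.1 0 1 * w.2 1 4 - 2 * w.1.2.1 1 0 * w.1.2.2.2.2.1 - w.1.2.1 1 1 * w.1.2.2.2.2.2.2.2 - w.1.2.2.2.2.2.2.2 * w.1.1) + s * ((-2 * a₀ * w.1.2.1 0 0 * w.1.2.1 0 1 * w.1.1 - 2 * b₀ * w.1.2.1 1 0 * w.1.2.1 1 1 * w.1.1 - 2 * w.1.2.1 0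 0 * w.1.2.1 0 1 * w.1.2.2.2.1 - w.1.2.1 0 0 * w.1.2.1 1 1 * w.1.2.2.2.2.2.2.2 - w.1.2.1 0 0 * w.1.2.2.2.2.2.2.2 * w.1.1 - w.1.2.1 0 1 * w.1.2.1 1 0 * w.1.2.2.2.2.2.2.2 - 2 * w.1.2.1 0 1 * w.1.2.2.2.1 * w.1.1 - 2 * w.1.2.1 1 0 * w.1.2.1 1 1 * w.1.2.2.2.2.1 - 2 * w.1.2.1 1 0 * w.1.2.2.2.2.1 * w.1.1 - w.1.2.1 1 1 * w.1.2.2.2.2.2.2.2 * w.1.1) + s * (-2 * w.1.2.1 0 0 * w.1.2.1 0 1 * w.1.2.2.2.1 * w.1.1 - w.1.2.1 0 0 * w.1.2.1 1 1 * w.1.2.2.2.2.2.2.2 * w.1.1 - w.1.2.1 0 1 * w.1.2.1 1 0 * w.1.2.2.2.2.2.2.2 * w.1.1 - 2 * w.1.2.1 1 0 * w.1.2.1 1 1 * w.1.2.2.2.2.1 * w.1.1))))) := by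
      funext s
      simp only [thetaF, mixC, rhsC, bpt, XmuCoeff, Prod.fst_add, Prod.snd_add,
        Prod.smul_fst, Prod.smul_snd, Pi.add_apply, Pi.smul_apply, Pi.zero_apply,
        Matrix.add_apply, Matrix.smul_apply, Matrix.one_apply, smul_eq_mul,
        v2e_0, v2e_1, v2e_m0, v2e_m1,
        v6e_0, v6e_1, v6e_2, v6e_3, v6e_4, v6e_5, v6e_m0, v6e_m1, v6e_m2, v6e_m3, v6e_m4, v6e_m5]
      norm_num
      ring
    rw [heq]
    convert hh using 1
    rfl
  · show HasDerivAt (fun s : ℝ => thetaF (bpt a₀ b₀ + s • w) 0 5) (Kmat a₀ b₀ w 0 5) 0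
    have hh := hornerD (b₀ * w.1.2.1 0 0 - 2 * b₀ * w.1.2.1 1 1 - b₀ * w.1.1 - w.1.2.2.2.2.1 + w.2 0 5) (-a₀ * w.1.2.1 0 1 * w.1.2.1 0 1 - b₀ * w.1.2.1 1 1 * w.1.2.1 1 1 - 2 * b₀ * w.1.2.1 1 1 * w.1.1 + w.1.2.1 0 0 * w.2 0 5 + w.1.2.1 0 1 * w.2 1 5 - w.1.2.1 0 1 * w.1.2.2.2.2.2.2.2 - 2 * w.1.2.1 1 1 * w.1.2.2.2.2.1 - w.1.2.2.2.2.1 * w.1.1)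
      (-a₀ * w.1.2.1 0 1 * w.1.2.1 0 1 * w.1.1 - b₀ * w.1.2.1 1 1 * w.1.2.1 1 1 * w.1.1 - w.1.2.1 0 1 * w.1.2.1 0 1 * w.1.2.2.2.1 - w.1.2.1 0 1 * w.1.2.1 1 1 * w.1.2.2.2.2.2.2.2 - w.1.2.1 0 1 * w.1.2.2.2.2.2.2.2 * w.1.1 - w.1.2.1 1 1 * w.1.2.1 1 1 * w.1.2.2.2.2.1 - 2 * w.1.2.1 1 1 * w.1.2.2.2.2.1 * w.1.1) (-w.1.2.1 0 1 * w.1.2.1 0 1 * w.1.2.2.2.1 * w.1.1 - w.1.2.1 0 1 * w.1.2.1 1 1 * w.1.2.2.2.2.2.2.2 * w.1.1 - w.1.2.1 1 1 * w.1.2.1 1 1 * w.1.2.2.2.2.1 * w.1.1)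
    have heq : (fun s : ℝ => thetaF (bpt a₀ b₀ + s • w) 0 5) =
        (fun s : ℝ => s * ((b₀ * w.1.2.1 0 0 - 2 * b₀ * w.1.2.1 1 1 - b₀ * w.1.1 - w.1.2.2.2.2.1 + w.2 0 5) + s * ((-a₀ * w.1.2.1 0 1 * w.1.2.1 0 1 - b₀ * w.1.2.1 1 1 * w.1.2.1 1 1 - 2 * b₀ * w.1.2.1 1 1 * w.1.1 + w.1.2.1 0 0 * w.2 0 5 + w.1.2.1 0 1 * w.2 1 5 - w.1.2.1 0 1 * w.1.2.2.2.2.2.2.2 - 2 * w.1.2.1 1 1 * w.1.2.2.2.2.1 - w.1.2.2.2.2.1 * w.1.1) + s * ((-a₀ * w.1.2.1 0 1 * w.1.2.1 0 1 * w.1.1 - b₀ * w.1.2.1 1 1 * w.1.2.1 1 1 * w.1.1 - w.1.2.1 0 1 * w.1.2.1 0 1 * w.1.2.2.2.1 - w.1.2.1 0 1 * w.1.2.1 1 1 * w.1.2.2.2.2.2.2.2 - w.1.2.1 0 1 * w.1.2.2.2.2.2.2.2 * w.1.1 - w.1.2.1 1 1 * w.1.2.1 1 1 * w.1.2.2.2.2.1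 - 2 * w.1.2.1 1 1 * w.1.2.2.2.2.1 * w.1.1) + s * (-w.1.2.1 0 1 * w.1.2.1 0 1 * w.1.2.2.2.1 * w.1.1 - w.1.2.1 0 1 * w.1.2.1 1 1 * w.1.2.2.2.2.2.2.2 * w.1.1 - w.1.2.1 1 1 * w.1.2.1 1 1 * w.1.2.2.2.2.1 * w.1.1))))) := by
      funext s
      simp only [thetaF, mixC, rhsC, bpt, XmuCoeff, Prod.fst_add, Prod.snd_add,
        Prod.smul_fst, Prod.smul_snd, Pi.add_apply, Pi.smul_apply, Pi.zero_apply,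
        Matrix.add_apply, Matrix.smul_apply, Matrix.one_apply, smul_eq_mul,
        v2e_0, v2e_1, v2e_m0, v2e_m1,
        v6e_0, v6e_1, v6e_2, v6e_3, v6e_4, v6e_5, v6e_m0, v6e_m1, v6e_m2, v6e_m3, v6e_m4, v6e_m5]
      norm_num
      ring
    rw [heq]
    convert hh using 1
    rfl
  · show HasDerivAt (fun s : ℝ => thetaF (bpt a₀ b₀ + s • w) 1 0) (Kmat a₀ b₀ w 1 0) 0
    have hh := hornerD ((1 / 4 : ℝ) * b₀ * w.1.2.1 1 0 - (1 / 2 : ℝ) * w.1.2.1 1 0 + w.2 1 0 - w.1.2.2.2.2.2.1) (w.1.2.1 1 0 * w.2 0 0 + w.1.2.1 1 1 * w.2 1 0 - w.1.2.2.2.2.2.1 * w.1.1 + 2 * w.1.2.2.1 0 * w.1.2.2.1 1)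
      (2 * w.1.1 * w.1.2.2.1 0 * w.1.2.2.1 1) (0)
    have heq : (fun s : ℝ => thetaF (bpt a₀ b₀ + s • w) 1 0) =
        (fun s : ℝ => s * (((1 / 4 : ℝ) * b₀ * w.1.2.1 1 0 - (1 / 2 : ℝ) * w.1.2.1 1 0 + w.2 1 0 - w.1.2.2.2.2.2.1) + s * ((w.1.2.1 1 0 * w.2 0 0 + w.1.2.1 1 1 * w.2 1 0 - w.1.2.2.2.2.2.1 * w.1.1 + 2 * w.1.2.2.1 0 * w.1.2.2.1 1) + s * ((2 * w.1.1 * w.1.2.2.1 0 * w.1.2.2.1 1) + s * (0))))) := by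
      funext s
      simp only [thetaF, mixC, rhsC, bpt, XmuCoeff, Prod.fst_add, Prod.snd_add,
        Prod.smul_fst, Prod.smul_snd, Pi.add_apply, Pi.smul_apply, Pi.zero_apply,
        Matrix.add_apply, Matrix.smul_apply, Matrix.one_apply, smul_eq_mul,
        v2e_0, v2e_1, v2e_m0, v2e_m1,
        v6e_0, v6e_1, v6e_2, v6e_3, v6e_4, v6e_5, v6e_m0, v6e_m1, v6e_m2, v6e_m3, v6e_m4, v6e_m5]
      norm_num
      ring
    rw [heq]
    convert hh using 1
    rfl
  · show HasDerivAt (fun s : ℝ => thetaF (bpt a₀ b₀ + s • w) 1 1) (Kmat a₀ b₀ w 1 1) 0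
    have hh := hornerD (w.2 1 1 + 2 * w.1.2.2.1 1) (2 * w.1.2.1 0 0 * w.1.2.2.1 1 + w.1.2.1 1 0 * w.2 0 1 + 2 * w.1.2.1 1 0 * w.1.2.2.1 0 + w.1.2.1 1 1 * w.2 1 1 + 2 * w.1.1 * w.1.2.2.1 1)
      (2 * w.1.2.1 0 0 * w.1.1 * w.1.2.2.1 1 + 2 * w.1.2.1 1 0 * w.1.1 * w.1.2.2.1 0) (0)
    have heq : (fun s : ℝ => thetaF (bpt a₀ b₀ + s • w) 1 1) =
        (fun s : ℝ => s * ((w.2 1 1 + 2 * w.1.2.2.1 1) + s * ((2 * w.1.2.1 0 0 * w.1.2.2.1 1 + w.1.2.1 1 0 * w.2 0 1 + 2 * w.1.2.1 1 0 * w.1.2.2.1 0 + w.1.2.1 1 1 * w.2 1 1 + 2 * w.1.1 * w.1.2.2.1 1) + s * ((2 * w.1.2.1 0 0 * w.1.1 * w.1.2.2.1 1 + 2 * w.1.2.1 1 0 * w.1.1 * w.1.2.2.1 0) + s * (0))))) := by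
      funext s
      simp only [thetaF, mixC, rhsC, bpt, XmuCoeff, Prod.fst_add, Prod.snd_add,
        Prod.smul_fst, Prod.smul_snd, Pi.add_apply, Pi.smul_apply, Pi.zero_apply,
        Matrix.add_apply, Matrix.smul_apply, Matrix.one_apply, smul_eq_mul,
        v2e_0, v2e_1, v2e_m0, v2e_m1,
        v6e_0, v6e_1, v6e_2, v6e_3, v6e_4, v6e_5, v6e_m0, v6e_m1, v6e_m2, v6e_m3, v6e_m4, v6e_m5]
      norm_num
      ring
    rw [heq]
    convert hh using 1
    rfl
  · show HasDerivAt (fun s : ℝ => thetaF (bpt a₀ b₀ + s • w) 1 2) (Kmat a₀ b₀ w 1 2) 0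
    have hh := hornerD (-b₀ * w.1.2.1 1 0 + w.1.2.1 1 0 + w.2 1 2 + 2 * w.1.2.2.1 0) (2 * w.1.2.1 0 1 * w.1.2.2.1 1 + w.1.2.1 1 0 * w.2 0 2 + w.1.2.1 1 1 * w.2 1 2 + 2 * w.1.2.1 1 1 * w.1.2.2.1 0 + 2 * w.1.1 * w.1.2.2.1 0)
      (2 * w.1.2.1 0 1 * w.1.1 * w.1.2.2.1 1 + 2 * w.1.2.1 1 1 * w.1.1 * w.1.2.2.1 0) (0)
    have heq : (fun s : ℝ => thetaF (bpt a₀ b₀ + s • w) 1 2) =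
        (fun s : ℝ => s * ((-b₀ * w.1.2.1 1 0 + w.1.2.1 1 0 + w.2 1 2 + 2 * w.1.2.2.1 0) + s * ((2 * w.1.2.1 0 1 * w.1.2.2.1 1 + w.1.2.1 1 0 * w.2 0 2 + w.1.2.1 1 1 * w.2 1 2 + 2 * w.1.2.1 1 1 * w.1.2.2.1 0 + 2 * w.1.1 * w.1.2.2.1 0) + s * ((2 * w.1.2.1 0 1 * w.1.1 * w.1.2.2.1 1 + 2 * w.1.2.1 1 1 * w.1.1 * w.1.2.2.1 0) + s * (0))))) := by
      funext s
      simp only [thetaF, mixC, rhsC, bpt, XmuCoeff, Prod.fst_add, Prod.snd_add,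
        Prod.smul_fst, Prod.smul_snd, Pi.add_apply, Pi.smul_apply, Pi.zero_apply,
        Matrix.add_apply, Matrix.smul_apply, Matrix.one_apply, smul_eq_mul,
        v2e_0, v2e_1, v2e_m0, v2e_m1,
        v6e_0, v6e_1, v6e_2, v6e_3, v6e_4, v6e_5, v6e_m0, v6e_m1, v6e_m2, v6e_m3, v6e_m4, v6e_m5]
      norm_num
      ring
    rw [heq]
    convert hh using 1
    rfl
  · show HasDerivAt (fun s : ℝ => thetaF (bpt a₀ b₀ + s • w) 1 3) (Kmat a₀ b₀ w 1 3) 0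
    have hh := hornerD (a₀ * w.1.2.1 1 0 + 2 * w.1.2.1 1 0 + w.2 1 3) (2 * w.1.2.1 0 0 * w.1.2.1 1 0 + w.1.2.1 1 0 * w.2 0 3 + 2 * w.1.2.1 1 0 * w.1.1 + w.1.2.1 1 1 * w.2 1 3)
      (2 * w.1.2.1 0 0 * w.1.2.1 1 0 * w.1.1) (0)
    have heq : (fun s : ℝ => thetaF (bpt a₀ b₀ + s • w) 1 3) =
        (fun s : ℝ => s * ((a₀ * w.1.2.1 1 0 + 2 * w.1.2.1 1 0 + w.2 1 3) + s * ((2 * w.1.2.1 0 0 * w.1.2.1 1 0 + w.1.2.1 1 0 * w.2 0 3 + 2 * w.1.2.1 1 0 * w.1.1 + w.1.2.1 1 1 * w.2 1 3) + s * ((2 * w.1.2.1 0 0 * w.1.2.1 1 0 * w.1.1) + s * (0))))) := by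
      funext s
      simp only [thetaF, mixC, rhsC, bpt, XmuCoeff, Prod.fst_add, Prod.snd_add,
        Prod.smul_fst, Prod.smul_snd, Pi.add_apply, Pi.smul_apply, Pi.zero_apply,
        Matrix.add_apply, Matrix.smul_apply, Matrix.one_apply, smul_eq_mul,
        v2e_0, v2e_1, v2e_m0, v2e_m1,
        v6e_0, v6e_1, v6e_2, v6e_3, v6e_4, v6e_5, v6e_m0, v6e_m1, v6e_m2, v6e_m3, v6e_m4, v6e_m5]
      norm_num
      ring
    rw [heq]
    convert hh using 1
    rfl
  · show HasDerivAt (fun s : ℝ => thetaF (bpt a₀ b₀ + s • w) 1 4) (Kmat a₀ b₀ w 1 4) 0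
    have hh := hornerD (2 * w.1.2.1 0 0 + w.2 1 4 + 2 * w.1.1) (2 * w.1.2.1 0 0 * w.1.2.1 1 1 + 2 * w.1.2.1 0 0 * w.1.1 + 2 * w.1.2.1 0 1 * w.1.2.1 1 0 + w.1.2.1 1 0 * w.2 0 4 + w.1.2.1 1 1 * w.2 1 4 + 2 * w.1.2.1 1 1 * w.1.1)
      (2 * w.1.2.1 0 0 * w.1.2.1 1 1 * w.1.1 + 2 * w.1.2.1 0 1 * w.1.2.1 1 0 * w.1.1) (0)
    have heq : (fun s : ℝ => thetaF (bpt a₀ b₀ + s • w) 1 4) =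
        (fun s : ℝ => s * ((2 * w.1.2.1 0 0 + w.2 1 4 + 2 * w.1.1) + s * ((2 * w.1.2.1 0 0 * w.1.2.1 1 1 + 2 * w.1.2.1 0 0 * w.1.1 + 2 * w.1.2.1 0 1 * w.1.2.1 1 0 + w.1.2.1 1 0 * w.2 0 4 + w.1.2.1 1 1 * w.2 1 4 + 2 * w.1.2.1 1 1 * w.1.1) + s * ((2 * w.1.2.1 0 0 * w.1.2.1 1 1 * w.1.1 + 2 * w.1.2.1 0 1 * w.1.2.1 1 0 * w.1.1) + s * (0))))) := by
      funext s
      simp only [thetaF, mixC, rhsC, bpt, XmuCoeff, Prod.fst_add, Prod.snd_add,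
        Prod.smul_fst, Prod.smul_snd, Pi.add_apply, Pi.smul_apply, Pi.zero_apply,
        Matrix.add_apply, Matrix.smul_apply, Matrix.one_apply, smul_eq_mul,
        v2e_0, v2e_1, v2e_m0, v2e_m1,
        v6e_0, v6e_1, v6e_2, v6e_3, v6e_4, v6e_5, v6e_m0, v6e_m1, v6e_m2, v6e_m3, v6e_m4, v6e_m5]
      norm_num
      ring
    rw [heq]
    convert hh using 1
    rfl
  · show HasDerivAt (fun s : ℝ => thetaF (bpt a₀ b₀ + s • w) 1 5) (Kmat a₀ b₀ w 1 5) 0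
    have hh := hornerD (b₀ * w.1.2.1 1 0 + 2 * w.1.2.1 0 1 + w.2 1 5) (2 * w.1.2.1 0 1 * w.1.2.1 1 1 + 2 * w.1.2.1 0 1 * w.1.1 + w.1.2.1 1 0 * w.2 0 5 + w.1.2.1 1 1 * w.2 1 5)
      (2 * w.1.2.1 0 1 * w.1.2.1 1 1 * w.1.1) (0)
    have heq : (fun s : ℝ => thetaF (bpt a₀ b₀ + s • w) 1 5) =
        (fun s : ℝ => s * ((b₀ * w.1.2.1 1 0 + 2 * w.1.2.1 0 1 + w.2 1 5) + s * ((2 * w.1.2.1 0 1 * w.1.2.1 1 1 + 2 * w.1.2.1 0 1 * w.1.1 + w.1.2.1 1 0 * w.2 0 5 + w.1.2.1 1 1 * w.2 1 5) + s * ((2 * w.1.2.1 0 1 * w.1.2.1 1 1 * w.1.1) + s * (0))))) := by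
      funext s
      simp only [thetaF, mixC, rhsC, bpt, XmuCoeff, Prod.fst_add, Prod.snd_add,
        Prod.smul_fst, Prod.smul_snd, Pi.add_apply, Pi.smul_apply, Pi.zero_apply,
        Matrix.add_apply, Matrix.smul_apply, Matrix.one_apply, smul_eq_mul,
        v2e_0, v2e_1, v2e_m0, v2e_m1,
        v6e_0, v6e_1, v6e_2, v6e_3, v6e_4, v6e_5, v6e_m0, v6e_m1, v6e_m2, v6e_m3, v6e_m4, v6e_m5]
      norm_num
      ring
    rw [heq]
    convert hh using 1
    rfl

set_option maxHeartbeats 1000000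

theorem snd_dir (a₀ b₀ : ℝ) (w : QE) (i : Fin 2) (j : Fin 6) :
    HasDerivAt (fun s : ℝ => (bpt a₀ b₀ + s • w).2 i j) (w.2 i j) 0 := by
  have heq : (fun s : ℝ => (bpt a₀ b₀ + s • w).2 i j)
      = fun s : ℝ => (bpt a₀ b₀).2 i j + s * w.2 i j := by
    funext s
    simp
  rw [heq]
  simpa using (((hasDerivAt_id (0:ℝ)).mul_const (w.2 i j)).const_add ((bpt a₀ b₀).2 i j))

theorem L_ker (a₀ b₀ : ℝ) (h : a₀ ≠ -2) (w : QE)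
    (hw : fderiv ℝ phiF (bpt a₀ b₀) w = 0) : w = 0 := by
  set L := fderiv ℝ phiF (bpt a₀ b₀) with hL
  have hdiff : HasFDerivAt phiF L (bpt a₀ b₀) :=
    (contDiff_phiF.differentiable one_ne_zero (bpt a₀ b₀)).hasFDerivAt
  have h0 : bpt a₀ b₀ + (0:ℝ) • w = bpt a₀ b₀ := by simp
  rw [← h0] at hdiff
  have hcomp : HasDerivAt (fun s : ℝ => phiF (bpt a₀ b₀ + s • w)) (L w) 0 :=
    by have := hdiff.comp_hasDerivAt 0 (line_hasDerivAt (bpt a₀ b₀) w); exact this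
  have hK : ∀ (i : Fin 2) (j : Fin 6), Kmat a₀ b₀ w i j = 0 := by
    intro i j
    let π : QC × QC →L[ℝ] ℝ := (ContinuousLinearMap.proj j).comp
      ((ContinuousLinearMap.proj i).comp (ContinuousLinearMap.fst ℝ QC QC))
    have h1 : HasDerivAt (fun s : ℝ => thetaF (bpt a₀ b₀ + s • w) i j) ((L w).1 i j) 0 :=
      π.hasFDerivAt.comp_hasDerivAt 0 hcomp
    have h2 := h1.unique (theta_dir a₀ b₀ w i j)
    rw [← h2, hw]
    rfl
  have hdc : ∀ (i : Fin 2) (j : Fin 6), w.2 i j = 0 := by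
    intro i j
    let π : QC × QC →L[ℝ] ℝ := (ContinuousLinearMap.proj j).comp
      ((ContinuousLinearMap.proj i).comp (ContinuousLinearMap.snd ℝ QC QC))
    have h1 : HasDerivAt (fun s : ℝ => (bpt a₀ b₀ + s • w).2 i j) ((L w).2 i j) 0 :=
      π.hasFDerivAt.comp_hasDerivAt 0 hcomp
    have h2 := h1.unique (snd_dir a₀ b₀ w i j)
    rw [← h2, hw]
    rfl
  have e00 := hK 0 0; have e01 := hK 0 1; have e02 := hK 0 2
  have e03 := hK 0 3; have e04 := hK 0 4; have e05 := hK 0 5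
  have e10 := hK 1 0; have e11 := hK 1 1; have e12 := hK 1 2
  have e13 := hK 1 3; have e14 := hK 1 4; have e15 := hK 1 5
  simp only [Kmat, v2e_0, v2e_1, v6e_0, v6e_1, v6e_2, v6e_3, v6e_4, v6e_5,
    hdc 0 0, hdc 0 1, hdc 0 2, hdc 0 3, hdc 0 4, hdc 0 5,
    hdc 1 0, hdc 1 1, hdc 1 2, hdc 1 3, hdc 1 4, hdc 1 5,
    add_zero, zero_add, sub_zero] at e00 e01 e02 e03 e04 e05 e10 e11 e12 e13 e14 e15
  have hv1 : w.1.2.2.1 1 = 0 := by linarith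
  have hA10 : w.1.2.1 1 0 = 0 := by
    have h2 : a₀ + 2 ≠ 0 := fun hc => h (by linarith)
    have h13 : (a₀ + 2) * w.1.2.1 1 0 = 0 := by linear_combination e13
    exact (mul_eq_zero.1 h13).resolve_left h2
  have hv0 : w.1.2.2.1 0 = 0 := by
    linear_combination (1/2 : ℝ) * e12 + ((b₀ - 1)/2) * hA10
  have hde0 : w.1.2.2.2.2.2.1 = 0 := by
    linear_combination (-1 : ℝ) * e10 + ((1/4 : ℝ) * b₀ - 1/2) * hA10
  have hA01 : w.1.2.1 0 1 = 0 := by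
    linear_combination (1/2 : ℝ) * e15 - (b₀/2) * hA10
  have hA00 : w.1.2.1 0 0 = - w.1.1 := by
    linear_combination (1/2 : ℝ) * e14
  have hA11 : w.1.2.1 1 1 = 0 := by
    linear_combination (-2 : ℝ) * e00 - e02 - (1/2 : ℝ) * e05 - 2 * hv1
  have hdl : w.1.1 = 0 := by
    linear_combination (-1/2 : ℝ) * e02 - (1/2 : ℝ) * e05 + (1/2 : ℝ) * hA00
      - b₀ * hv1 - ((b₀ + 1)/2) * hA11
  have hdb : w.1.2.2.2.2.1 = 0 := by
    linear_combination (-1 : ℝ) * e05 + b₀ * hA00 - 2 * b₀ * hA11 - 2 * b₀ * hdl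
  have hda : w.1.2.2.2.1 = 0 := by
    linear_combination (-1 : ℝ) * e03 - a₀ * hA00
  have hde1 : w.1.2.2.2.2.2.2.1 = 0 := by
    linear_combination (-1 : ℝ) * e01 - 2 * a₀ * hv0 + (b₀ - 1) * hA10
  have hde2 : w.1.2.2.2.2.2.2.2 = 0 := by
    linear_combination (-1 : ℝ) * e04 - (2 * a₀ + 2) * hA01 - 2 * b₀ * hA10
  refine Prod.ext (Prod.ext hdl (Prod.ext ?_ (Prod.ext ?_ ?_))) ?_
  · show w.1.2.1 = 0
    have hA00z : w.1.2.1 0 0 = 0 := by rw [hA00, hdl, neg_zero]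
    ext i j
    fin_cases i <;> fin_cases j
    · exact hA00z
    · exact hA01
    · exact hA10
    · exact hA11
  · show w.1.2.2.1 = 0
    ext k
    fin_cases k
    · exact hv0
    · exact hv1
  · exact Prod.ext hda (Prod.ext hdb (Prod.ext hde0 (Prod.ext hde1 hde2)))
  · show w.2 = 0
    funext i j
    exact hdc i j

theorem theta_zero_identity (x : QE) (hx : thetaF x = 0) (p : Fin 2 → ℝ) :
    (x.1.2.1).mulVec (quadEval x.2 p) =
      x.1.1 • Xmu x.1.2.2.2.1 x.1.2.2.2.2.1 x.1.2.2.2.2.2.1 x.1.2.2.2.2.2.2.1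
        x.1.2.2.2.2.2.2.2 ((x.1.2.1).mulVec p + x.1.2.2.1) := by
  have hmc : mixC x.1.2.1 x.2 = rhsC x.1.1 x.1.2.1 x.1.2.2.1 x.1.2.2.2.1 x.1.2.2.2.2.1
      x.1.2.2.2.2.2.1 x.1.2.2.2.2.2.2.1 x.1.2.2.2.2.2.2.2 := by
    funext i j
    have h' := congrFun (congrFun hx i) j
    simp only [thetaF, Pi.zero_apply] at h'
    linarith
  rw [← mixC_eval, hmc, rhsC_eval]

open Classical in
noncomputable def GLmk (M : Matrix (Fin 2) (Fin 2) ℝ) : GL (Fin 2) ℝ :=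
  if h : IsUnit M.det then Matrix.nonsingInvUnit M h else 1

theorem GLmk_val {M : Matrix (Fin 2) (Fin 2) ℝ} (h : IsUnit M.det) :
    ((GLmk M : GL (Fin 2) ℝ) : Matrix (Fin 2) (Fin 2) ℝ) = M := by
  rw [GLmk]
  rw [dif_pos h]
  rfl

theorem GLmk_one : GLmk 1 = 1 := by
  have h : IsUnit (Matrix.det (1 : Matrix (Fin 2) (Fin 2) ℝ)) := by simp
  apply Units.ext
  rw [GLmk_val h]
  rfl

theorem detset_nhds : {M : Matrix (Fin 2) (Fin 2) ℝ | IsUnit M.det} ∈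
    𝓝 (1 : Matrix (Fin 2) (Fin 2) ℝ) := by
  have hopen : IsOpen {M : Matrix (Fin 2) (Fin 2) ℝ | M.det ≠ 0} :=
    isOpen_compl_singleton.preimage (continuous_id.matrix_det)
  have : {M : Matrix (Fin 2) (Fin 2) ℝ | M.det ≠ 0} =
      {M : Matrix (Fin 2) (Fin 2) ℝ | IsUnit M.det} := by
    ext M
    simp [isUnit_iff_ne_zero]
  rw [← this]
  exact hopen.mem_nhds (by simp)

theorem GLmk_contAt : ContinuousAt GLmk 1 := by
  rw [Units.isInducing_embedProduct.continuousAt_iff]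
  have hcand : ContinuousAt
      (fun M : Matrix (Fin 2) (Fin 2) ℝ => (M, MulOpposite.op M⁻¹)) 1 := by
    apply ContinuousAt.prodMk continuousAt_id
    apply ContinuousAt.comp MulOpposite.continuous_op.continuousAt
    apply continuousAt_matrix_inv
    rw [Matrix.det_one, Ring.inverse_eq_inv']
    exact continuousAt_inv₀ one_ne_zero
  apply hcand.congr
  filter_upwards [detset_nhds] with M hM
  show (M, MulOpposite.op M⁻¹) = Units.embedProduct _ (GLmk M)
  rw [GLmk]
  rw [dif_pos hM]
  rfl

set_option maxRecDepth 10000 in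
theorem aux_main (a₀ b₀ : ℝ) (h : a₀ ≠ -2) :
    ∀ W ∈ 𝓝 (((1 : ℝ), (1 : GL (Fin 2) ℝ), (0 : Fin 2 → ℝ),
        (a₀, b₀, (0 : ℝ), (0 : ℝ), (0 : ℝ))) :
        ℝ × GL (Fin 2) ℝ × (Fin 2 → ℝ) × (ℝ × ℝ × ℝ × ℝ × ℝ)),
      ∃ N ∈ 𝓝 (XmuCoeff a₀ b₀ 0 0 0),
        ∀ c ∈ N, ∃ (lam : ℝ) (A : GL (Fin 2) ℝ) (v : Fin 2 → ℝ) (a b e0 e1 e2 : ℝ),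
          (lam, A, v, (a, b, e0, e1, e2)) ∈ W ∧
          ∀ p : Fin 2 → ℝ,
            quadEval c p =
              lam • (↑(A⁻¹) : Matrix (Fin 2) (Fin 2) ℝ).mulVec
                (Xmu a b e0 e1 e2 ((↑A : Matrix (Fin 2) (Fin 2) ℝ).mulVec p + v)) := by
  intro W hW
  set L := fderiv ℝ phiF (bpt a₀ b₀) with hLdef
  have hinj : Function.Injective L := by
    intro x y hxy
    have hsub : L (x - y) = 0 := by rw [map_sub, hxy, sub_self]
    exact sub_eq_zero.1 (L_ker a₀ b₀ h (x - y) hsub)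
  have hrank : Module.finrank ℝ QE = Module.finrank ℝ (QC × QC) := by
    simp [Module.finrank_prod, Module.finrank_pi_fintype, Module.finrank_pi,
      Module.finrank_self, Module.finrank_matrix]
  have hbij : Function.Bijective L.toLinearMap :=
    ⟨hinj, (LinearMap.injective_iff_surjective_of_finrank_eq_finrank hrank).1 hinj⟩
  let e : QE ≃ₗ[ℝ] QC × QC := LinearEquiv.ofBijective L.toLinearMap hbij
  let E : QE ≃L[ℝ] QC × QC := e.toContinuousLinearEquiv
  have hE : (E : QE →L[ℝ] QC × QC) = L := ContinuousLinearMap.ext fun w => rfl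
  have hstrict : HasStrictFDerivAt phiF (E : QE →L[ℝ] QC × QC) (bpt a₀ b₀) := by
    rw [hE]
    exact contDiff_phiF.contDiffAt.hasStrictFDerivAt one_ne_zero
  set g := hstrict.localInverse phiF E (bpt a₀ b₀) with hgdef
  have hright := hstrict.eventually_right_inverse
  have hgcont := hstrict.localInverse_continuousAt
  have hbase : phiF (bpt a₀ b₀) = ((0 : QC), XmuCoeff a₀ b₀ 0 0 0) := phiF_base a₀ b₀
  have htend : Filter.Tendsto (fun c : QC => ((0 : QC), c))
      (𝓝 (XmuCoeff a₀ b₀ 0 0 0)) (𝓝 (phiF (bpt a₀ b₀))) := by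
    rw [hbase]
    exact (continuous_const.prodMk continuous_id).continuousAt
  have ev1 : ∀ᶠ c in 𝓝 (XmuCoeff a₀ b₀ 0 0 0),
      phiF (g ((0 : QC), c)) = ((0 : QC), c) := htend.eventually hright
  have hψcont : ContinuousAt (fun c : QC => g ((0 : QC), c)) (XmuCoeff a₀ b₀ 0 0 0) :=
    ContinuousAt.comp (x := XmuCoeff a₀ b₀ 0 0 0)
      (by rw [hbase] at hgcont; exact hgcont)
      (continuous_const.prodMk continuous_id).continuousAt
  have hψbase : g ((0 : QC), XmuCoeff a₀ b₀ 0 0 0) = bpt a₀ b₀ := by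
    rw [← hbase]
    exact hstrict.localInverse_apply_image
  -- the good parameter set
  have hGL1 : ContinuousAt (fun t : QP => GLmk t.2.1) ((bpt a₀ b₀).1) :=
    by have := ContinuousAt.comp (x := (bpt a₀ b₀).1) GLmk_contAt
         (continuous_snd.fst.continuousAt); exact this
  have hXi : ContinuousAt (fun t : QP =>
      ((t.1, GLmk t.2.1, t.2.2.1, t.2.2.2) :
        ℝ × GL (Fin 2) ℝ × (Fin 2 → ℝ) × (ℝ × ℝ × ℝ × ℝ × ℝ))) ((bpt a₀ b₀).1) :=
    continuousAt_fst.prodMk (hGL1.prodMk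
      ((continuous_snd.snd.fst.continuousAt).prodMk
        (continuous_snd.snd.snd.continuousAt)))
  have hXival : (((bpt a₀ b₀).1.1, GLmk ((bpt a₀ b₀).1.2.1), (bpt a₀ b₀).1.2.2.1,
      (bpt a₀ b₀).1.2.2.2) :
      ℝ × GL (Fin 2) ℝ × (Fin 2 → ℝ) × (ℝ × ℝ × ℝ × ℝ × ℝ)) =
      ((1 : ℝ), (1 : GL (Fin 2) ℝ), (0 : Fin 2 → ℝ), (a₀, b₀, (0 : ℝ), (0 : ℝ), (0 : ℝ))) := by
    show ((1 : ℝ), GLmk 1, (0 : Fin 2 → ℝ), (a₀, b₀, (0 : ℝ), (0 : ℝ), (0 : ℝ))) = _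
    rw [GLmk_one]
  have hWnb : {t : QP | ((t.1, GLmk t.2.1, t.2.2.1, t.2.2.2) :
      ℝ × GL (Fin 2) ℝ × (Fin 2 → ℝ) × (ℝ × ℝ × ℝ × ℝ × ℝ)) ∈ W} ∈ 𝓝 ((bpt a₀ b₀).1) :=
    hXi.preimage_mem_nhds (by rw [hXival]; exact hW)
  have hDetnb : {t : QP | IsUnit t.2.1.det} ∈ 𝓝 ((bpt a₀ b₀).1) := by
    have hcont : ContinuousAt (fun t : QP => t.2.1) ((bpt a₀ b₀).1) :=
      continuous_snd.fst.continuousAt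
    have hmem := hcont.preimage_mem_nhds
      (show {M : Matrix (Fin 2) (Fin 2) ℝ | IsUnit M.det} ∈ 𝓝 ((bpt a₀ b₀).1.2.1) from
        detset_nhds)
    exact hmem
  have hGood := Filter.inter_mem hWnb hDetnb
  have hψ1 : ContinuousAt (fun c : QC => (g ((0 : QC), c)).1) (XmuCoeff a₀ b₀ 0 0 0) :=
    continuousAt_fst.comp hψcont
  have ev2 : ∀ᶠ c in 𝓝 (XmuCoeff a₀ b₀ 0 0 0),
      (g ((0 : QC), c)).1 ∈ ({t : QP | ((t.1, GLmk t.2.1, t.2.2.1, t.2.2.2) :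
        ℝ × GL (Fin 2) ℝ × (Fin 2 → ℝ) × (ℝ × ℝ × ℝ × ℝ × ℝ)) ∈ W} ∩
        {t : QP | IsUnit t.2.1.det}) :=
    hψ1.preimage_mem_nhds (by rw [hψbase]; exact hGood)
  refine ⟨_, (ev1.and ev2), ?_⟩
  rintro c ⟨h1, h2W, h2det⟩
  set t := (g ((0 : QC), c)).1 with htdef
  have hsnd : (g ((0 : QC), c)).2 = c := congrArg Prod.snd h1
  have hgc : g ((0 : QC), c) = (t, c) := Prod.ext rfl hsnd
  have hth : thetaF (t, c) = 0 := by
    rw [← hgc]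
    exact congrArg Prod.fst h1
  have hId := theta_zero_identity (t, c) hth
  have hunit : (↑((GLmk t.2.1)⁻¹) : Matrix (Fin 2) (Fin 2) ℝ) *
      (↑(GLmk t.2.1) : Matrix (Fin 2) (Fin 2) ℝ) = 1 := Units.inv_mul _
  refine ⟨t.1, GLmk t.2.1, t.2.2.1, t.2.2.2.1, t.2.2.2.2.1, t.2.2.2.2.2.1,
    t.2.2.2.2.2.2.1, t.2.2.2.2.2.2.2, h2W, ?_⟩
  intro p
  have hId' : (↑(GLmk t.2.1) : Matrix (Fin 2) (Fin 2) ℝ).mulVec (quadEval c p) =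
      t.1 • Xmu t.2.2.2.1 t.2.2.2.2.1 t.2.2.2.2.2.1 t.2.2.2.2.2.2.1 t.2.2.2.2.2.2.2
        ((↑(GLmk t.2.1) : Matrix (Fin 2) (Fin 2) ℝ).mulVec p + t.2.2.1) := by
    rw [GLmk_val h2det]
    exact hId p
  rw [← Matrix.mulVec_smul, ← hId', Matrix.mulVec_mulVec, hunit, Matrix.one_mulVec]

end Aux

/-- every quadratic vector field sufficiently close (in the topology of
coefficients) to `X_{(a₀,b₀,0,0,0)}`, with `a₀ ≠ −2`, can be brought by an affine change
of coordinates `p ↦ A·p + v` and a constant rescaling of time `λ` to the form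
`X_{(a,b,ε₀,ε₁,ε₂)}`, with `(λ,A,v,a,b,ε₀,ε₁,ε₂)` arbitrarily close to
`(1, I₂, 0, a₀, b₀, 0, 0, 0)`. -/
theorem stmt_1 (a₀ b₀ : ℝ) (h : a₀ ≠ -2) :
    ∀ W ∈ 𝓝 (((1 : ℝ), (1 : GL (Fin 2) ℝ), (0 : Fin 2 → ℝ),
        (a₀, b₀, (0 : ℝ), (0 : ℝ), (0 : ℝ))) :
        ℝ × GL (Fin 2) ℝ × (Fin 2 → ℝ) × (ℝ × ℝ × ℝ × ℝ × ℝ)),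
      ∃ N ∈ 𝓝 (XmuCoeff a₀ b₀ 0 0 0),
        ∀ c ∈ N, ∃ (lam : ℝ) (A : GL (Fin 2) ℝ) (v : Fin 2 → ℝ) (a b e0 e1 e2 : ℝ),
          (lam, A, v, (a, b, e0, e1, e2)) ∈ W ∧
          ∀ p : Fin 2 → ℝ,
            quadEval c p =
              lam • (↑(A⁻¹) : Matrix (Fin 2) (Fin 2) ℝ).mulVec
                (Xmu a b e0 e1 e2 ((↑A : Matrix (Fin 2) (Fin 2) ℝ).mulVec p + v)) := by
  exact aux_main a₀ b₀ h
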